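/- arXiv:1604.00881 — 3 statements merged into one kernel-verified Lean document; each statement's English description precedes it below -/
import Mathlib

section
/- Let X be a Banach space, V open, A : V → X Fréchet differentiable at a fixed point x* ∈ V with spectral radius ρ(A'(x*)) < 1. Then for every ε > 0 with ρ(A'(x*)) + ε < 1, there exist radii r, r' > 0 such that for every starting point x⁰ ∈ B(x*, r'), the successive approximations x^{k+1} = A(x^k) are well-defined, remain in B(x*, r) ⊆ V, converge to x*, and satisfy ‖x^k − x*‖ ≤ r (ρ(A'(x*)) + ε)^k for all k. -/
open Filter Metric

private lemma exists_pow_norm_le {X : Type*} [NormedAddCommGroup X] [NormedSpace ℂ X]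
    [CompleteSpace X] (A' : X →L[ℂ] X) (t : ℝ) (ht : 0 < t)
    (hlt : spectralRadius ℂ A' < ENNReal.ofReal t) :
    ∃ n : ℕ, 1 ≤ n ∧ ‖A' ^ n‖ ≤ t ^ n := by
  have h := (spectrum.pow_norm_pow_one_div_tendsto_nhds_spectralRadius A').eventually_lt_const hlt
  obtain ⟨n, hn1, hn⟩ := (h.and (eventually_ge_atTop 1)).exists
  refine ⟨n, hn, ?_⟩
  rw [ENNReal.ofReal_lt_ofReal_iff ht] at hn1
  have h0 : (0:ℝ) ≤ ‖A' ^ n‖ := norm_nonneg _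
  have : (‖A' ^ n‖ ^ (1/(n:ℝ))) ^ n ≤ t ^ n :=
    pow_le_pow_left₀ (Real.rpow_nonneg h0 _) hn1.le n
  rwa [one_div, Real.rpow_inv_natCast_pow h0 (by omega)] at this

theorem stmt5
    {X : Type*} [NormedAddCommGroup X] [NormedSpace ℂ X] [CompleteSpace X]
    (V : Set X) (hV : IsOpen V) (A : X → X) (xs : X) (hxs : xs ∈ V)
    (hfix : A xs = xs) (A' : X →L[ℂ] X) (hA' : HasFDerivAt A A' xs)
    (hρ : spectralRadius ℂ A' < 1)
    (ε : ℝ) (hε : 0 < ε) (hρε : (spectralRadius ℂ A').toReal + ε < 1) :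
    ∃ r > 0, ∃ r' > 0, Metric.ball xs r ⊆ V ∧
      ∀ x0 ∈ Metric.ball xs r',
        (∀ k : ℕ, A^[k] x0 ∈ Metric.ball xs r ∧
          ‖A^[k] x0 - xs‖ ≤ r * ((spectralRadius ℂ A').toReal + ε) ^ k) ∧
        Filter.Tendsto (fun k => A^[k] x0) Filter.atTop (nhds xs) := by
  set ρr : ℝ := (spectralRadius ℂ A').toReal with hρr
  have hρr0 : 0 ≤ ρr := ENNReal.toReal_nonneg
  set t : ℝ := ρr + ε/2 with htdef
  have ht : 0 < t := by positivity
  set q : ℝ := ρr + ε with hqdef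
  have hq0 : 0 < q := by positivity
  have hq1 : q < 1 := hρε
  have htq : t + ε/2 = q := by rw [htdef, hqdef]; ring
  -- find n with ‖A'^n‖ ≤ t^n
  have hlt : spectralRadius ℂ A' < ENNReal.ofReal t := by
    rw [ENNReal.lt_ofReal_iff_toReal_lt hρ.ne_top]
    simp only [← hρr, htdef]; linarith
  obtain ⟨n, hn1, hAn⟩ := exists_pow_norm_le A' t ht hlt
  -- the adapted norm
  set N : X → ℝ := fun u => ∑ i ∈ Finset.range n, ‖(A' ^ i) u‖ / t ^ i with hN
  have hNterm : ∀ (u : X) (i : ℕ), 0 ≤ ‖(A' ^ i) u‖ / t ^ i := fun u i => by positivity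
  have hmem0 : (0 : ℕ) ∈ Finset.range n := Finset.mem_range.mpr (by omega)
  have hf0 : ∀ u : X, ‖(A' ^ 0) u‖ / t ^ 0 = ‖u‖ := fun u => by
    simp [ContinuousLinearMap.one_apply]
  have hle : ∀ u : X, ‖u‖ ≤ N u := by
    intro u
    have h1 := Finset.single_le_sum (f := fun i => ‖(A' ^ i) u‖ / t ^ i)
      (fun i _ => hNterm u i) hmem0
    calc ‖u‖ = ‖(A' ^ 0) u‖ / t ^ 0 := (hf0 u).symm
      _ ≤ N u := h1
  set D : ℝ := (∑ i ∈ Finset.range n, ‖A' ^ i‖ / t ^ i) + 1 with hD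
  have hD1 : 1 ≤ D := by
    have : (0:ℝ) ≤ ∑ i ∈ Finset.range n, ‖A' ^ i‖ / t ^ i :=
      Finset.sum_nonneg fun i _ => by positivity
    rw [hD]; linarith
  have hD0 : 0 < D := by linarith
  have hNle : ∀ u : X, N u ≤ D * ‖u‖ := by
    intro u
    have h1 : N u ≤ ∑ i ∈ Finset.range n, (‖A' ^ i‖ / t ^ i) * ‖u‖ := by
      refine Finset.sum_le_sum fun i _ => ?_
      rw [div_mul_eq_mul_div]
      exact div_le_div_of_nonneg_right ((A' ^ i).le_opNorm u) (by positivity)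
    rw [← Finset.sum_mul] at h1
    calc N u ≤ _ := h1
      _ ≤ D * ‖u‖ := by
          apply mul_le_mul_of_nonneg_right _ (norm_nonneg u)
          rw [hD]; linarith
  have hNadd : ∀ u v : X, N (u + v) ≤ N u + N v := by
    intro u v
    rw [hN, ← Finset.sum_add_distrib]
    refine Finset.sum_le_sum fun i _ => ?_
    rw [← add_div]
    refine div_le_div_of_nonneg_right ?_ (by positivity)
    rw [map_add]; exact norm_add_le _ _
  -- contraction of the linear part in the N norm
  have hNA' : ∀ u : X, N (A' u) ≤ t * N u := by
    intro u
    have hshift : ∀ i : ℕ, ‖(A' ^ i) (A' u)‖ / t ^ i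
        = t * (‖(A' ^ (i+1)) u‖ / t ^ (i+1)) := by
      intro i
      rw [pow_succ, ContinuousLinearMap.mul_apply]
      rw [pow_succ]
      field_simp
    have h1 : N (A' u) = t * ∑ i ∈ Finset.range n, ‖(A' ^ (i+1)) u‖ / t ^ (i+1) := by
      rw [hN, Finset.mul_sum]
      exact Finset.sum_congr rfl fun i _ => hshift i
    have h2 : ∑ i ∈ Finset.range n, ‖(A' ^ (i+1)) u‖ / t ^ (i+1)
        = (N u + ‖(A' ^ n) u‖ / t ^ n) - ‖u‖ := by
      have := Finset.sum_range_succ' (fun i => ‖(A' ^ i) u‖ / t ^ i) n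
      rw [Finset.sum_range_succ (fun i => ‖(A' ^ i) u‖ / t ^ i) n] at this
      rw [hf0 u] at this
      rw [hN]; linarith
    have h3 : ‖(A' ^ n) u‖ / t ^ n ≤ ‖u‖ := by
      rw [div_le_iff₀ (by positivity)]
      calc ‖(A' ^ n) u‖ ≤ ‖A' ^ n‖ * ‖u‖ := (A' ^ n).le_opNorm u
        _ ≤ t ^ n * ‖u‖ := mul_le_mul_of_nonneg_right hAn (norm_nonneg u)
        _ = ‖u‖ * t ^ n := mul_comm _ _
    rw [h1, h2]
    have : (N u + ‖(A' ^ n) u‖ / t ^ n) - ‖u‖ ≤ N u := by linarith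
    exact mul_le_mul_of_nonneg_left this ht.le
  -- get the radius from differentiability
  set δ : ℝ := ε / (2 * D) with hδ
  have hδ0 : 0 < δ := by positivity
  have hball : ∀ᶠ x in nhds xs, ‖A x - A xs - A' (x - xs)‖ ≤ δ * ‖x - xs‖ ∧ x ∈ V :=
    (hA'.isLittleO.def hδ0).and (hV.mem_nhds hxs)
  obtain ⟨r, hr0, hrball⟩ := Metric.eventually_nhds_iff_ball.mp hball
  have hrV : Metric.ball xs r ⊆ V := fun x hx => (hrball x hx).2
  -- key contraction estimate
  have key : ∀ x ∈ Metric.ball xs r, N (A x - xs) ≤ q * N (x - xs) := by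
    intro x hx
    have hw := (hrball x hx).1
    rw [hfix] at hw
    have hsplit : A x - xs = A' (x - xs) + (A x - xs - A' (x - xs)) := by abel
    calc N (A x - xs) = N (A' (x - xs) + (A x - xs - A' (x - xs))) := by rw [← hsplit]
      _ ≤ N (A' (x - xs)) + N (A x - xs - A' (x - xs)) := hNadd _ _
      _ ≤ t * N (x - xs) + D * ‖A x - xs - A' (x - xs)‖ := add_le_add (hNA' _) (hNle _)
      _ ≤ t * N (x - xs) + D * (δ * ‖x - xs‖) := by
          refine add_le_add le_rfl (mul_le_mul_of_nonneg_left hw hD0.le)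
      _ = t * N (x - xs) + (ε/2) * ‖x - xs‖ := by
          rw [hδ]; field_simp
      _ ≤ t * N (x - xs) + (ε/2) * N (x - xs) := by
          refine add_le_add le_rfl (mul_le_mul_of_nonneg_left (hle _) (by positivity))
      _ = q * N (x - xs) := by rw [← htq]; ring
  refine ⟨r, hr0, r / (2 * D), by positivity, hrV, ?_⟩
  intro x0 hx0
  -- main induction
  have main : ∀ k : ℕ, N (A^[k] x0 - xs) ≤ q ^ k * (r / 2) := by
    intro k
    induction k with
    | zero =>
      simp only [Function.iterate_zero, id_eq, pow_zero, one_mul]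
      calc N (x0 - xs) ≤ D * ‖x0 - xs‖ := hNle _
        _ ≤ D * (r / (2 * D)) := by
            refine mul_le_mul_of_nonneg_left ?_ hD0.le
            rw [← dist_eq_norm]; exact (mem_ball.mp hx0).le
        _ = r / 2 := by field_simp
    | succ k ih =>
      have hqk1 : q ^ k ≤ 1 := pow_le_one₀ hq0.le hq1.le
      have hmem : A^[k] x0 ∈ Metric.ball xs r := by
        rw [mem_ball, dist_eq_norm]
        calc ‖A^[k] x0 - xs‖ ≤ N (A^[k] x0 - xs) := hle _
          _ ≤ q ^ k * (r / 2) := ih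
          _ ≤ 1 * (r / 2) := mul_le_mul_of_nonneg_right hqk1 (by linarith)
          _ < r := by linarith
      rw [Function.iterate_succ_apply']
      calc N (A (A^[k] x0) - xs) ≤ q * N (A^[k] x0 - xs) := key _ hmem
        _ ≤ q * (q ^ k * (r / 2)) := mul_le_mul_of_nonneg_left ih hq0.le
        _ = q ^ (k+1) * (r / 2) := by ring
  have bound : ∀ k : ℕ, ‖A^[k] x0 - xs‖ ≤ q ^ k * (r / 2) :=
    fun k => (hle _).trans (main k)
  constructor
  · intro k
    have hqk1 : q ^ k ≤ 1 := pow_le_one₀ hq0.le hq1.le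
    constructor
    · rw [mem_ball, dist_eq_norm]
      calc ‖A^[k] x0 - xs‖ ≤ q ^ k * (r / 2) := bound k
        _ ≤ 1 * (r / 2) := mul_le_mul_of_nonneg_right hqk1 (by linarith)
        _ < r := by linarith
    · calc ‖A^[k] x0 - xs‖ ≤ q ^ k * (r / 2) := bound k
        _ ≤ r * q ^ k := by
            rw [mul_comm]
            refine mul_le_mul_of_nonneg_right (by linarith) (pow_nonneg hq0.le k)
  · rw [tendsto_iff_dist_tendsto_zero]
    have hq : Tendsto (fun k : ℕ => q ^ k * (r / 2)) atTop (nhds 0) := by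
      have := (tendsto_pow_atTop_nhds_zero_of_lt_one hq0.le hq1).mul_const (r / 2)
      simpa using this
    refine squeeze_zero (fun k => dist_nonneg) (fun k => ?_) hq
    rw [dist_eq_norm]; exact bound k
end

section
/- Let X be a Banach space, T a compact bounded linear operator on X such that I − T is invertible, and (T_n) a sequence of bounded linear operators converging pointwise to T with the sequence (T_n − T) being collectively compact (i.e., the set ∪_n {(T_n − T)x : ‖x‖ ≤ 1} is relatively compact) and sup_n ‖T_n‖ < ∞. Then for n large enough, I − T_n is invertible and sup_n ‖(I − T_n)⁻¹‖ < ∞. -/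
open Filter Metric Set

/-- A bounded, pointwise-null sequence of operators converges uniformly on compact sets. -/
lemma unif_small {X : Type*} [NormedAddCommGroup X] [NormedSpace ℝ X]
    (S : ℕ → X →L[ℝ] X) (m : ℝ) (hm : ∀ n, ‖S n‖ ≤ m)
    (h0 : ∀ x, Filter.Tendsto (fun n => S n x) Filter.atTop (nhds 0))
    {K : Set X} (hK : IsCompact K) {ε : ℝ} (hε : 0 < ε) :
    ∃ N, ∀ n ≥ N, ∀ y ∈ K, ‖S n y‖ ≤ ε := by
  have hm0 : 0 ≤ m := le_trans (norm_nonneg _) (hm 0)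
  set r : ℝ := ε / (2 * (m + 1)) with hr
  have hr0 : 0 < r := by positivity
  obtain ⟨t, hts, htf, hcov⟩ := hK.finite_cover_balls hr0
  have hev : ∀ᶠ n in atTop, ∀ y ∈ t, ‖S n y‖ ≤ ε / 2 := by
    rw [eventually_all_finite htf]
    intro y _
    have := (h0 y).eventually (Metric.closedBall_mem_nhds (0 : X) (half_pos hε))
    filter_upwards [this] with n hn
    exact mem_closedBall_zero_iff.mp hn
  obtain ⟨N, hN⟩ := eventually_atTop.mp hev
  refine ⟨N, fun n hn y hy => ?_⟩
  obtain ⟨z, hz, hyz⟩ := mem_iUnion₂.mp (hcov hy)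
  have hdist : ‖y - z‖ ≤ r := by
    have := mem_ball_iff_norm.mp hyz
    linarith
  have h1 : ‖S n (y - z)‖ ≤ m * r := by
    calc ‖S n (y - z)‖ ≤ ‖S n‖ * ‖y - z‖ := (S n).le_opNorm _
      _ ≤ m * r := mul_le_mul (hm n) hdist (norm_nonneg _) hm0
  have h2 : m * r ≤ ε / 2 := by
    rw [hr, mul_div_assoc', div_le_div_iff₀ (by positivity) (by norm_num)]
    nlinarith [hε.le, hm0]
  have h3 : S n y = S n z + S n (y - z) := by rw [map_sub]; abel
  calc ‖S n y‖ = ‖S n z + S n (y - z)‖ := by rw [h3]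
    _ ≤ ‖S n z‖ + ‖S n (y - z)‖ := norm_add_le _ _
    _ ≤ ε / 2 + m * r := add_le_add (hN n hn z hz) h1
    _ ≤ ε := by linarith

theorem stmt12
    {X : Type*} [NormedAddCommGroup X] [NormedSpace ℝ X] [CompleteSpace X]
    (T : X →L[ℝ] X) (hT : IsCompactOperator T)
    (U : X →L[ℝ] X) (hU₁ : (1 - T) * U = 1) (hU₂ : U * (1 - T) = 1)
    (Tn : ℕ → X →L[ℝ] X)
    (hptw : ∀ x : X, Filter.Tendsto (fun n => Tn n x) Filter.atTop (nhds (T x)))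
    (hcc : IsCompact (closure (⋃ n : ℕ, (fun x => (Tn n - T) x) '' Metric.closedBall 0 1)))
    (c : ℝ) (hbd : ∀ n, ‖Tn n‖ ≤ c) :
    ∃ N : ℕ, ∃ C : ℝ, ∀ n ≥ N, ∃ V : X →L[ℝ] X,
      (1 - Tn n) * V = 1 ∧ V * (1 - Tn n) = 1 ∧ ‖V‖ ≤ C := by
  have hc0 : (0 : ℝ) ≤ c := le_trans (norm_nonneg _) (hbd 0)
  set m : ℝ := c + ‖T‖ with hmdef
  have hm0 : (0 : ℝ) ≤ m := by positivity
  have hm : ∀ n, ‖Tn n - T‖ ≤ m := fun n =>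
    le_trans (norm_sub_le _ _) (add_le_add_left (hbd n) _)
  have h0 : ∀ x, Filter.Tendsto (fun n => (Tn n - T) x) Filter.atTop (nhds 0) := by
    intro x
    have := (hptw x).sub_const (T x)
    simpa [ContinuousLinearMap.sub_apply, sub_self] using this
  set ε : ℝ := (2 * (‖U‖ + 1))⁻¹ with hεdef
  have hε : 0 < ε := by positivity
  have hhalf : ‖U‖ * ε ≤ 1 / 2 := by
    rw [hεdef, ← div_eq_mul_inv, div_le_div_iff₀ (by positivity) (by norm_num)]
    nlinarith [norm_nonneg U]
  have hK : IsCompact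
      (U '' closure (⋃ n : ℕ, (fun x => (Tn n - T) x) '' Metric.closedBall 0 1)) :=
    hcc.image U.continuous
  obtain ⟨N, hN⟩ := unif_small (fun n => Tn n - T) m hm h0 hK hε
  refine ⟨N, (1 + ‖U‖ * m) * 2 * ‖U‖, fun n hn => ?_⟩
  set A : X →L[ℝ] X := U * (Tn n - T) with hAdef
  have hA2 : ‖A * A‖ ≤ 1 / 2 := by
    refine ContinuousLinearMap.opNorm_le_bound _ (by norm_num) fun x => ?_
    by_cases hx : x = 0
    · simp [hx]
    · set y : X := ‖x‖⁻¹ • x with hydef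
      have hxn : 0 < ‖x‖ := norm_pos_iff.mpr hx
      have hy : ‖y‖ ≤ 1 := by
        rw [hydef, norm_smul, norm_inv, norm_norm, inv_mul_cancel₀ hxn.ne']
      have hmem : (Tn n - T) y ∈
          closure (⋃ k : ℕ, (fun x => (Tn k - T) x) '' Metric.closedBall 0 1) :=
        subset_closure (mem_iUnion.mpr ⟨n, mem_image_of_mem _ (mem_closedBall_zero_iff.mpr hy)⟩)
      have hb : ‖(Tn n - T) (U ((Tn n - T) y))‖ ≤ ε :=
        hN n hn _ (mem_image_of_mem _ hmem)
      have hAy : ‖(A * A) y‖ ≤ 1 / 2 := by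
        have hrfl : (A * A) y = U ((Tn n - T) (U ((Tn n - T) y))) := rfl
        rw [hrfl]
        calc ‖U ((Tn n - T) (U ((Tn n - T) y)))‖
            ≤ ‖U‖ * ‖(Tn n - T) (U ((Tn n - T) y))‖ := U.le_opNorm _
          _ ≤ ‖U‖ * ε := mul_le_mul_of_nonneg_left hb (norm_nonneg U)
          _ ≤ 1 / 2 := hhalf
      have hxy : (A * A) x = ‖x‖ • (A * A) y := by
        have hsy : ‖x‖ • y = x := smul_inv_smul₀ hxn.ne' x
        conv_lhs => rw [← hsy]
        rw [map_smul]
      calc ‖(A * A) x‖ = ‖x‖ * ‖(A * A) y‖ := by rw [hxy, norm_smul, norm_norm]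
        _ ≤ ‖x‖ * (1 / 2) := mul_le_mul_of_nonneg_left hAy (norm_nonneg x)
        _ = 1 / 2 * ‖x‖ := mul_comm _ _
  have hA2' : ‖A * A‖ < 1 := lt_of_le_of_lt hA2 (by norm_num)
  set u : (X →L[ℝ] X)ˣ := Units.oneSub (A * A) hA2' with hudef
  set B : X →L[ℝ] X := ↑u⁻¹ with hBdef
  have huB : (1 - A * A) * B = 1 := u.mul_inv
  have hB : ‖B‖ ≤ 2 := by
    have h1 := tsum_geometric_le_of_norm_lt_one (A * A) hA2'
    have hone : ‖(1 : X →L[ℝ] X)‖ ≤ 1 := ContinuousLinearMap.norm_id_le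
    have hinv : (1 - ‖A * A‖)⁻¹ ≤ 2 := by
      have h12 : (1 : ℝ) / 2 ≤ 1 - ‖A * A‖ := by linarith
      calc (1 - ‖A * A‖)⁻¹ ≤ (1 / 2 : ℝ)⁻¹ := by
            exact inv_anti₀ (by norm_num) h12
        _ = 2 := by norm_num
    calc ‖B‖ = ‖∑' k : ℕ, (A * A) ^ k‖ := rfl
      _ ≤ ‖(1 : X →L[ℝ] X)‖ - 1 + (1 - ‖A * A‖)⁻¹ := h1
      _ ≤ 2 := by linarith
  have hcommA : Commute A B := by
    have h1 : Commute A (u : X →L[ℝ] X) :=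
      (Commute.one_right A).sub_right ((Commute.refl A).mul_right (Commute.refl A))
    exact h1.units_inv_right
  have hinv1 : (1 - A) * ((1 + A) * B) = 1 := by
    rw [← mul_assoc, show (1 - A) * (1 + A) = 1 - A * A from by noncomm_ring, huB]
  have hinv2 : ((1 + A) * B) * (1 - A) = 1 := by
    have hc2 : Commute (1 - A) B := (Commute.one_left B).sub_left hcommA
    calc ((1 + A) * B) * (1 - A) = (1 + A) * (B * (1 - A)) := mul_assoc _ _ _
      _ = (1 + A) * ((1 - A) * B) := by rw [← hc2.eq]
      _ = ((1 + A) * (1 - A)) * B := (mul_assoc _ _ _).symm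
      _ = (1 - A * A) * B := by
          rw [show (1 + A) * (1 - A) = 1 - A * A from by noncomm_ring]
      _ = 1 := huB
  have hfac : (1 - T) * (1 - A) = 1 - Tn n := by
    have h1 : (1 - T) * A = Tn n - T := by
      rw [hAdef, ← mul_assoc, hU₁, one_mul]
    rw [mul_sub, mul_one, h1]
    abel
  set w : (X →L[ℝ] X)ˣ := ⟨1 - A, (1 + A) * B, hinv1, hinv2⟩ with hwdef
  set w0 : (X →L[ℝ] X)ˣ := ⟨1 - T, U, hU₁, hU₂⟩ with hw0def
  refine ⟨((1 + A) * B) * U, ?_, ?_, ?_⟩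
  · rw [← hfac]
    exact (w0 * w).mul_inv
  · rw [← hfac]
    exact (w0 * w).inv_mul
  · have hA' : ‖A‖ ≤ ‖U‖ * m :=
      le_trans (norm_mul_le _ _) (mul_le_mul_of_nonneg_left (hm n) (norm_nonneg U))
    have h1A : ‖1 + A‖ ≤ 1 + ‖U‖ * m := by
      calc ‖1 + A‖ ≤ ‖(1 : X →L[ℝ] X)‖ + ‖A‖ := norm_add_le _ _
        _ ≤ 1 + ‖U‖ * m := add_le_add ContinuousLinearMap.norm_id_le hA'
    have h1Anonneg : (0 : ℝ) ≤ 1 + ‖U‖ * m := by positivity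
    calc ‖((1 + A) * B) * U‖ ≤ ‖(1 + A) * B‖ * ‖U‖ := norm_mul_le _ _
      _ ≤ (‖1 + A‖ * ‖B‖) * ‖U‖ :=
          mul_le_mul_of_nonneg_right (norm_mul_le _ _) (norm_nonneg _)
      _ ≤ ((1 + ‖U‖ * m) * 2) * ‖U‖ :=
          mul_le_mul_of_nonneg_right
            (mul_le_mul h1A hB (norm_nonneg _) h1Anonneg) (norm_nonneg _)
      _ = (1 + ‖U‖ * m) * 2 * ‖U‖ := rfl
end

section
/- Let X be a Banach space, T ∈ L(X) with I − T invertible, and (T_n) a sequence in L(X) such that S_n := (I − T_n)⁻¹ exists for all n with sup_n ‖S_n‖ ≤ c < ∞, and such that ‖(T − T_n) S_n (T − T_n)‖ → 0 as n → ∞. Then the spectral radius ρ(I − S_n(I − T)) → 0 as n → ∞; in particular it is < 1 for n large enough. -/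
open Filter ENNReal

theorem stmt13
    {X : Type*} [NormedAddCommGroup X] [NormedSpace ℂ X] [CompleteSpace X]
    (T : X →L[ℂ] X) (U : X →L[ℂ] X)
    (hU₁ : (1 - T) * U = 1) (hU₂ : U * (1 - T) = 1)
    (Tn : ℕ → X →L[ℂ] X) (S : ℕ → X →L[ℂ] X)
    (hS : ∀ n, (1 - Tn n) * S n = 1 ∧ S n * (1 - Tn n) = 1)
    (c : ℝ) (hc : ∀ n, ‖S n‖ ≤ c)
    (hlim : Filter.Tendsto (fun n => ‖(T - Tn n) * S n * (T - Tn n)‖)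
      Filter.atTop (nhds 0)) :
    Filter.Tendsto (fun n => spectralRadius ℂ (1 - S n * (1 - T)))
      Filter.atTop (nhds 0) ∧
    ∃ N : ℕ, ∀ n ≥ N, spectralRadius ℂ (1 - S n * (1 - T)) < 1 := by
  set B : ℕ → X →L[ℂ] X := fun n => 1 - S n * (1 - T) with hB
  have hBeq : ∀ n, B n = S n * (T - Tn n) := by
    intro n
    have h := (hS n).2
    show (1 : X →L[ℂ] X) - S n * (1 - T) = _
    calc (1 : X →L[ℂ] X) - S n * (1 - T)
        = S n * (1 - Tn n) - S n * (1 - T) := by rw [h]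
      _ = S n * ((1 - Tn n) - (1 - T)) := (mul_sub _ _ _).symm
      _ = S n * (T - Tn n) := by congr 1; abel
  have hBsq : ∀ n, (B n) ^ 2 = S n * ((T - Tn n) * S n * (T - Tn n)) := by
    intro n; rw [hBeq n]; noncomm_ring
  have hnormsq : ∀ n, ‖(B n) ^ 2‖ ≤ c * ‖(T - Tn n) * S n * (T - Tn n)‖ := by
    intro n
    rw [hBsq n]
    calc ‖S n * ((T - Tn n) * S n * (T - Tn n))‖
        ≤ ‖S n‖ * ‖(T - Tn n) * S n * (T - Tn n)‖ := norm_mul_le _ _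
      _ ≤ c * ‖(T - Tn n) * S n * (T - Tn n)‖ := by gcongr; exact hc n
  have hsq0 : Tendsto (fun n => ‖(B n) ^ 2‖) atTop (nhds 0) := by
    have hub : Tendsto (fun n => c * ‖(T - Tn n) * S n * (T - Tn n)‖) atTop (nhds 0) := by
      simpa using hlim.const_mul c
    exact squeeze_zero (fun n => norm_nonneg _) hnormsq hub
  have hkey : ∀ n, spectralRadius ℂ (B n) ≤ (‖(B n) ^ 2‖₊ : ℝ≥0∞) ^ (1/2 : ℝ) := by
    intro n
    have h := spectrum.spectralRadius_le_pow_nnnorm_pow_one_div ℂ (B n) 1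
    have h1 : (‖(1 : X →L[ℂ] X)‖₊ : ℝ≥0∞) ^ (1/2 : ℝ) ≤ 1 := by
      have : (‖(1 : X →L[ℂ] X)‖₊ : ℝ≥0∞) ≤ 1 := by
        rw [← ENNReal.coe_one, ENNReal.coe_le_coe, ← NNReal.coe_le_coe]
        exact ContinuousLinearMap.norm_id_le
      calc (‖(1 : X →L[ℂ] X)‖₊ : ℝ≥0∞) ^ (1/2 : ℝ) ≤ (1 : ℝ≥0∞) ^ (1/2 : ℝ) := by
            exact ENNReal.rpow_le_rpow this (by norm_num)
        _ = 1 := ENNReal.one_rpow _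
    have h2 : ((1 : ℕ) + 1 : ℝ) = 2 := by norm_num
    calc spectralRadius ℂ (B n)
        ≤ (‖(B n) ^ (1 + 1)‖₊ : ℝ≥0∞) ^ (1 / ((1 : ℕ) + 1) : ℝ) *
          (‖(1 : X →L[ℂ] X)‖₊ : ℝ≥0∞) ^ (1 / ((1 : ℕ) + 1) : ℝ) := h
      _ = (‖(B n) ^ 2‖₊ : ℝ≥0∞) ^ (1/2 : ℝ) * (‖(1 : X →L[ℂ] X)‖₊ : ℝ≥0∞) ^ (1/2 : ℝ) := by
          norm_num
      _ ≤ (‖(B n) ^ 2‖₊ : ℝ≥0∞) ^ (1/2 : ℝ) * 1 :=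
          mul_le_mul_right h1 _
      _ = (‖(B n) ^ 2‖₊ : ℝ≥0∞) ^ (1/2 : ℝ) := mul_one _
  have hub0 : Tendsto (fun n => (‖(B n) ^ 2‖₊ : ℝ≥0∞) ^ (1/2 : ℝ)) atTop (nhds 0) := by
    have h0 : Tendsto (fun n => (‖(B n) ^ 2‖₊ : ℝ≥0∞)) atTop (nhds 0) := by
      rw [← ENNReal.coe_zero]
      exact ENNReal.tendsto_coe.mpr <| by
        simpa [← NNReal.tendsto_coe] using hsq0
    have := (ENNReal.continuous_rpow_const (y := (1/2 : ℝ))).tendsto 0 |>.comp h0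
    simpa [Function.comp_def, ENNReal.zero_rpow_of_pos (by norm_num : (0:ℝ) < 1/2)] using this
  have hmain : Tendsto (fun n => spectralRadius ℂ (B n)) atTop (nhds 0) :=
    tendsto_of_tendsto_of_tendsto_of_le_of_le tendsto_const_nhds hub0
      (fun n => zero_le) hkey
  refine ⟨hmain, ?_⟩
  have hev : ∀ᶠ n in atTop, spectralRadius ℂ (B n) < 1 :=
    hmain.eventually_lt_const (by norm_num)
  obtain ⟨N, hN⟩ := eventually_atTop.mp hev
  exact ⟨N, hN⟩
end
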